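/- For any ξ ∈ Φ, φ(g(ξ)) = τ_R·(λ_R^u)²·ψ(ξ). -/

import Mathlib

noncomputable section

/-- The parameter region `Φ`: `τ_L > δ_L + 1`, `δ_L > 0`, `τ_R < -(δ_R + 1)`, `δ_R > 0`. -/
def PhiSet : Set (ℝ × ℝ × ℝ × ℝ) :=
  {ξ | ξ.1 > ξ.2.1 + 1 ∧ 0 < ξ.2.1 ∧ ξ.2.2.1 < -(ξ.2.2.2 + 1) ∧ 0 < ξ.2.2.2}

/-- The function `φ` whose zero set bounds `Φ_BYG`. -/
def phiFn (ξ : ℝ × ℝ × ℝ × ℝ) : ℝ :=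
  ξ.2.2.2 - (1 + ξ.2.2.1) * ξ.2.1
    + (1 / 2) * ((1 + ξ.2.2.1) * ξ.1 - ξ.2.2.1 - ξ.2.1 - ξ.2.2.2)
      * (ξ.1 + Real.sqrt (ξ.1 ^ 2 - 4 * ξ.2.1))

/-- The renormalisation operator `g`. -/
def gmap (ξ : ℝ × ℝ × ℝ × ℝ) : ℝ × ℝ × ℝ × ℝ :=
  (ξ.2.2.1 ^ 2 - 2 * ξ.2.2.2, ξ.2.2.2 ^ 2, ξ.1 * ξ.2.2.1 - ξ.2.1 - ξ.2.2.2, ξ.2.1 * ξ.2.2.2)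

/-- The unstable eigenvalue `λ_R^u` of `A_R`. -/
def lamRu (ξ : ℝ × ℝ × ℝ × ℝ) : ℝ := (ξ.2.2.1 - Real.sqrt (ξ.2.2.1 ^ 2 - 4 * ξ.2.2.2)) / 2

/-- The stable eigenvalue `λ_R^s` of `A_R`. -/
def lamRs (ξ : ℝ × ℝ × ℝ × ℝ) : ℝ := (ξ.2.2.1 + Real.sqrt (ξ.2.2.1 ^ 2 - 4 * ξ.2.2.2)) / 2

/-- The function `ψ`. -/
def psiFn (ξ : ℝ × ℝ × ℝ × ℝ) : ℝ :=
  (ξ.1 * ξ.2.2.1 - ξ.2.2.2) * lamRu ξ + (ξ.2.1 / ξ.2.2.2 + ξ.2.1 - 1) * lamRs ξ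
    - ξ.1 * (1 + ξ.2.2.2) + ξ.2.2.1 * (1 - ξ.2.1)

/-- Lemma 4.2: for any `ξ ∈ Φ`, `φ(g(ξ)) = τ_R (λ_R^u)² ψ(ξ)`. -/
theorem phi_g_eq_psi (ξ : ℝ × ℝ × ℝ × ℝ) (hξ : ξ ∈ PhiSet) :
    phiFn (gmap ξ) = ξ.2.2.1 * (lamRu ξ) ^ 2 * psiFn ξ := by
  obtain ⟨tL, dL, tR, dR⟩ := ξ
  obtain ⟨h1, h2, h3, h4⟩ := hξ
  simp only [PhiSet, Set.mem_setOf_eq] at *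
  have hD : tR ^ 2 - 4 * dR > 0 := by nlinarith [sq_nonneg (dR - 1), sq_nonneg (tR + dR + 1)]
  set s := Real.sqrt (tR ^ 2 - 4 * dR) with hs
  have hs2 : s ^ 2 = tR ^ 2 - 4 * dR := Real.sq_sqrt hD.le
  have hsnn : 0 ≤ s := Real.sqrt_nonneg _
  have htR : tR < 0 := by nlinarith
  have hkey : Real.sqrt ((tR ^ 2 - 2 * dR) ^ 2 - 4 * dR ^ 2) = -tR * s := by
    rw [show (tR ^ 2 - 2 * dR) ^ 2 - 4 * dR ^ 2 = ((-tR) * s) ^ 2 by nlinarith]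
    exact Real.sqrt_sq (by nlinarith)
  simp only [phiFn, gmap, psiFn, lamRu, lamRs]
  rw [hkey, ← hs]
  have hdR : dR ≠ 0 := h4.ne'
  field_simp
  linear_combination (4*tR*dR*s - 4*tR*dR^2*s - 12*tR^2*dR + 12*tR^2*dR^2 - 4*dL*tR*s - 4*dL*tR*dR*s + 4*dL*tR^2 + 12*dL*tR^2*dR + 8*tL*tR*dR + 8*tL*tR*dR^2 + 4*tL*tR^2*dR*s - 12*tL*tR^3*dR + (3*dR*dL*tR - 3*dR*tL*tR^2 - 3*dR*tR + 3*dR^2*tR + 3*dL*tR)*s + (-9*dR*dL*tR^2 - 6*dR*tL*tR + 9*dR*tL*tR^3 + 9*dR*tR^2 - 6*dR^2*tL*tR - 9*dR^2*tR^2 - 3*dL*tR^2)) * hs2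

end
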